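/- Let n ≥ 3 and let 𝒜 be an invertible 2^{n−1} × 2^{n−1} complex matrix with entries a_{I,J} indexed by binary strings I = (i₂,…,i_n), J = (j₂,…,j_n) ∈ {0,1}^{n−1}. Let 𝒱 ⊆ (ℂ²)^{⊗n} be the orthogonal complement of the span of the vectors (1,α) ⊗ 𝒜(Σ_J α^{j₂2^{n−2}+⋯+j_n2⁰}|J⟩) over all α ∈ ℂ. For a bipartition of the parties {A₁,…,A_n} into S|S̄ with |S| = k (1 ≤ k ≤ n−1), other than {A₁}|{A₂,…,A_n}, let σ be the permutation of (1,…,n) listing first the indices in S in increasing order and then those in S̄ in increasing order, and for a tuple β = (β_K)_{K∈{0,1}^k} define the matrix 𝒳_σ(β) with rows indexed by M ∈ {0,1}^{n−k}, columns indexed by p ∈ {0,1,…,2^{n−1}}, and entries [𝒳_σ(β)]_{M,p} = Σ β_{(i_{σ(1)},…,i_{σ(k)})} · a_{(i₂,…,i_n),(j₂,…,j_n)}, where the sum is over all i₁,…,i_n, j₂,…,j_n ∈ {0,1} satisfying i₁ + j₂2^{n−2} + ⋯ + j_n2⁰ = p and (i_{σ(k+1)},…,i_{σ(n)}) = M. Then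 𝒱 is a genuinely entangled subspace of dimension 2^{n−1} − 1 if and only if, for every such bipartition and every nonzero tuple β, the matrix 𝒳_σ(β) has rank 2^{n−k}. -/

import Mathlib

noncomputable section

def IsBiproduct {n : ℕ} {d : Fin n → ℕ} (S : Finset (Fin n))
    (ψ : EuclideanSpace ℂ (∀ i, Fin (d i))) : Prop :=
  ∃ (φ : (∀ i : {i // i ∈ S}, Fin (d i.1)) → ℂ)
    (χ : (∀ i : {i // i ∉ S}, Fin (d i.1)) → ℂ),
    ∀ f : ∀ i, Fin (d i), ψ f = φ (fun i => f i.1) * χ (fun i => f i.1)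

def IsGME {n : ℕ} {d : Fin n → ℕ} (ψ : EuclideanSpace ℂ (∀ i, Fin (d i))) : Prop :=
  ψ ≠ 0 ∧ ∀ S : Finset (Fin n), S.Nonempty → S ≠ Finset.univ → ¬ IsBiproduct S ψ

def IsGES {n : ℕ} {d : Fin n → ℕ}
    (V : Submodule ℂ (EuclideanSpace ℂ (∀ i, Fin (d i)))) : Prop :=
  ∀ ψ ∈ V, ψ ≠ 0 → IsGME ψ

/-- The exponent `j₂2^{n-2} + ⋯ + j_n2⁰` attached to a binary string
`J = (j₂,…,j_n) ∈ {0,1}^{n-1}` (here the string has length `n`, indexed by `Fin n`). -/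
def binExp (n : ℕ) (J : Fin n → Fin 2) : ℕ :=
  ∑ t : Fin n, (J t : ℕ) * 2 ^ (n - 1 - (t : ℕ))

/-- The vectors `(1,α) ⊗ 𝒜(Σ_J α^{binExp J}|J⟩)` spanning `𝒱^⊥`; the parties are
`A₁,…,A_{n+1}`, indexed by `Fin (n+1)`, and `𝒜` acts on the last `n` of them. -/
def spanningVec (n : ℕ) (A : Matrix (Fin n → Fin 2) (Fin n → Fin 2) ℂ) (α : ℂ) :
    EuclideanSpace ℂ (Fin (n + 1) → Fin 2) :=
  WithLp.toLp 2 (fun f => ![(1 : ℂ), α] (f 0) *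
    A.mulVec (fun J => α ^ binExp n J) (fun t => f t.succ))

/-- The matrix `𝒳_σ(β)` of Eq. (7) for the bipartition `S|S̄`: rows are indexed by
binary strings `M` on `S̄`, columns by `p ∈ {0,…,2^n}`, and the entry is the sum of
`β_{i|_S} · a_{(i₂,…,i_{n+1}),J}` over all global binary strings `i` and all `J` with
`i₁ + binExp J = p` and `i|_{S̄} = M`. -/
def Xmat (n : ℕ) (A : Matrix (Fin n → Fin 2) (Fin n → Fin 2) ℂ)
    (S : Finset (Fin (n + 1))) (β : ({i // i ∈ S} → Fin 2) → ℂ) :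
    Matrix ({i // i ∉ S} → Fin 2) (Fin (2 ^ n + 1)) ℂ :=
  fun M p =>
    ∑ i : Fin (n + 1) → Fin 2, ∑ J : Fin n → Fin 2,
      if (i 0 : ℕ) + binExp n J = (p : ℕ) ∧ (fun s : {i // i ∉ S} => i s.1) = M then
        β (fun s : {i // i ∈ S} => i s.1) * A (fun t => i t.succ) J
      else 0

namespace GESAux
open Finset



def binEquiv (n : ℕ) : (Fin n → Fin 2) ≃ Fin (2 ^ n) :=
  (Equiv.arrowCongr Fin.revPerm (Equiv.refl (Fin 2))).trans finFunctionFinEquiv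

lemma binEquiv_val (n : ℕ) (J : Fin n → Fin 2) : ((binEquiv n J : Fin (2^n)) : ℕ) = binExp n J := by
  simp only [binEquiv, Equiv.trans_apply, Equiv.arrowCongr_apply, finFunctionFinEquiv_apply,
    Equiv.refl_symm, Equiv.coe_refl, Function.comp]
  rw [binExp]
  refine Fintype.sum_equiv Fin.revPerm _ _ (fun b => ?_)
  simp [Fin.revPerm, Fin.val_rev]
  exact Or.inl (by have := b.isLt; omega)

lemma binExp_lt (n : ℕ) (J : Fin n → Fin 2) : binExp n J < 2 ^ n := by
  rw [← binEquiv_val]; exact (binEquiv n J).isLt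

lemma binExp_symm (n : ℕ) (k : Fin (2 ^ n)) : binExp n ((binEquiv n).symm k) = (k : ℕ) := by
  rw [← binEquiv_val]; simp

lemma binExp_inj (n : ℕ) {J J' : Fin n → Fin 2} (h : binExp n J = binExp n J') : J = J' := by
  apply (binEquiv n).injective
  apply Fin.val_injective
  rw [binEquiv_val, binEquiv_val]; exact h

/-- selection lemma -/
lemma sum_binExp_ite {n : ℕ} (g : (Fin n → Fin 2) → ℂ) (c : ℕ) :
    (∑ J : Fin n → Fin 2, if binExp n J = c then g J else 0)
      = if h : c < 2 ^ n then g ((binEquiv n).symm ⟨c, h⟩) else 0 := by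
  split
  · rename_i h
    rw [Finset.sum_eq_single ((binEquiv n).symm ⟨c, h⟩)]
    · rw [if_pos (by rw [binExp_symm])]
    · intro J _ hJ
      rw [if_neg]
      intro hc
      exact hJ (by apply binExp_inj n; rw [hc, binExp_symm])
    · intro h'; exact absurd (Finset.mem_univ _) h'
  · rename_i h
    apply Finset.sum_eq_zero
    intro J _
    rw [if_neg]
    intro hc
    exact h (hc ▸ binExp_lt n J)


variable {n : ℕ} (A : Matrix (Fin n → Fin 2) (Fin n → Fin 2) ℂ)

def wvec (p : Fin (2 ^ n + 1)) : EuclideanSpace ℂ (Fin (n + 1) → Fin 2) :=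
  WithLp.toLp 2 (fun f => ∑ J : Fin n → Fin 2,
    if (f 0 : ℕ) + binExp n J = (p : ℕ) then A (fun t => f t.succ) J else 0)

lemma matrix_one_alpha (α : ℂ) (i : Fin 2) : ![(1 : ℂ), α] i = α ^ (i : ℕ) := by
  fin_cases i <;> simp

lemma spanningVec_apply (α : ℂ) (f : Fin (n + 1) → Fin 2) :
    spanningVec n A α f
      = ∑ J : Fin n → Fin 2, α ^ ((f 0 : ℕ) + binExp n J) * A (fun t => f t.succ) J := by
  rw [spanningVec, PiLp.toLp_apply, matrix_one_alpha, Matrix.mulVec, dotProduct, Finset.mul_sum]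
  refine Finset.sum_congr rfl (fun J _ => ?_)
  rw [pow_add]; ring

lemma euc_sum_apply {ι κ : Type*} [Fintype ι] [Fintype κ] (g : κ → EuclideanSpace ℂ ι)
    (x : ι) : (∑ k, g k) x = ∑ k, g k x :=
  by rw [WithLp.ofLp_sum, Finset.sum_apply]

lemma euc_smul_apply {ι : Type*} [Fintype ι] (c : ℂ) (v : EuclideanSpace ℂ ι) (x : ι) :
    (c • v) x = c * v x := rfl

lemma spanningVec_eq_sum (α : ℂ) :
    spanningVec n A α = ∑ p : Fin (2 ^ n + 1), α ^ (p : ℕ) • wvec A p := by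
  ext f
  have happ : (∑ p : Fin (2 ^ n + 1), α ^ (p : ℕ) • wvec A p) f
      = ∑ p : Fin (2 ^ n + 1), α ^ (p : ℕ) * wvec A p f := by
    rw [euc_sum_apply]; exact Finset.sum_congr rfl (fun p _ => euc_smul_apply _ _ _)
  rw [happ, spanningVec_apply]
  simp only [wvec, PiLp.toLp_apply, Finset.mul_sum]
  rw [Finset.sum_comm]
  refine Finset.sum_congr rfl (fun J _ => ?_)
  have hlt : (f 0 : ℕ) + binExp n J < 2 ^ n + 1 := by
    have h1 := binExp_lt n J
    have h2 : (f 0 : ℕ) < 2 := (f 0).isLt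
    omega
  have hterm : ∀ x : Fin (2 ^ n + 1),
      α ^ (x : ℕ) * (if (f 0 : ℕ) + binExp n J = (x : ℕ) then A (fun t => f t.succ) J else 0)
      = if x = ⟨(f 0 : ℕ) + binExp n J, hlt⟩ then
          α ^ ((f 0 : ℕ) + binExp n J) * A (fun t => f t.succ) J else 0 := by
    intro x
    by_cases hx : x = ⟨(f 0 : ℕ) + binExp n J, hlt⟩
    · subst hx; simp
    · rw [if_neg hx, if_neg, mul_zero]
      exact fun hc => hx (Fin.ext hc.symm)
  rw [Finset.sum_congr rfl (fun x _ => hterm x), Finset.sum_ite_eq' Finset.univ,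
    if_pos (Finset.mem_univ _)]

local notation "⟪" x ", " y "⟫" => @inner ℂ _ _ x y
local notation "conj" => starRingEnd ℂ

lemma mem_orthogonal_span_range_iff {E : Type*} [NormedAddCommGroup E]
    [InnerProductSpace ℂ E] {ι : Sort*} (v : ι → E) (ψ : E) :
    ψ ∈ (Submodule.span ℂ (Set.range v))ᗮ ↔ ∀ a, ⟪v a, ψ⟫ = 0 := by
  rw [Submodule.mem_orthogonal]
  constructor
  · intro h a; exact h _ (Submodule.subset_span ⟨a, rfl⟩)
  · intro h u hu
    induction hu using Submodule.span_induction with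
    | mem x hx => obtain ⟨a, rfl⟩ := hx; exact h a
    | zero => exact inner_zero_left ψ
    | add x y _ _ hx hy => rw [inner_add_left, hx, hy, add_zero]
    | smul c x _ hx => rw [inner_smul_left, hx, mul_zero]

lemma inner_euc {ι : Type*} [Fintype ι] (x y : EuclideanSpace ℂ ι) :
    ⟪x, y⟫ = ∑ f, conj (x f) * y f := by
  simp [PiLp.inner_apply, RCLike.inner_apply, mul_comm]

lemma inner_spanning (α : ℂ) (ψ : EuclideanSpace ℂ (Fin (n + 1) → Fin 2)) :
    ⟪spanningVec n A α, ψ⟫ = ∑ p : Fin (2 ^ n + 1), (conj α) ^ (p : ℕ) * ⟪wvec A p, ψ⟫ := by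
  rw [spanningVec_eq_sum, sum_inner]
  exact Finset.sum_congr rfl fun p _ => by rw [inner_smul_left, map_pow]

lemma mem_orth_iff (ψ : EuclideanSpace ℂ (Fin (n + 1) → Fin 2)) :
    ψ ∈ (Submodule.span ℂ (Set.range (spanningVec n A)))ᗮ ↔
      ∀ p : Fin (2 ^ n + 1), ⟪wvec A p, ψ⟫ = 0 := by
  rw [mem_orthogonal_span_range_iff]
  constructor
  · intro h p
    set Q : Polynomial ℂ :=
      ∑ q : Fin (2 ^ n + 1), Polynomial.C ⟪wvec A q, ψ⟫ * Polynomial.X ^ (q : ℕ) with hQdef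
    have hQ : ∀ β : ℂ, Q.eval β = 0 := by
      intro β
      have h2 := h (conj β)
      rw [inner_spanning] at h2
      rw [hQdef, Polynomial.eval_finset_sum]
      simp only [Polynomial.eval_mul, Polynomial.eval_C, Polynomial.eval_pow, Polynomial.eval_X]
      simp only [Complex.conj_conj] at h2
      rw [← h2]
      exact Finset.sum_congr rfl fun q _ => mul_comm _ _
    have hQ0 : Q = 0 := Polynomial.funext (fun r => by rw [hQ]; simp)
    have hc : Q.coeff (p : ℕ) = ⟪wvec A p, ψ⟫ := by
      rw [hQdef, Polynomial.finset_sum_coeff]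
      rw [Finset.sum_congr rfl
        (fun q _ => by rw [Polynomial.coeff_C_mul, Polynomial.coeff_X_pow])]
      simp [Fin.val_eq_val]
    rw [hQ0, Polynomial.coeff_zero] at hc
    exact hc.symm
  · intro h α
    rw [inner_spanning]
    simp [h]

lemma sum_fin_ite {N : ℕ} (c : ℕ) (hc : c < N) (F : Fin N → ℂ) :
    ∑ p : Fin N, (if c = (p : ℕ) then F p else 0) = F ⟨c, hc⟩ := by
  rw [Finset.sum_congr rfl (fun p _ => ?_), Finset.sum_ite_eq' Finset.univ (⟨c, hc⟩ : Fin N) F,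
    if_pos (Finset.mem_univ _)]
  by_cases hp : p = ⟨c, hc⟩
  · subst hp; simp
  · rw [if_neg hp, if_neg]
    exact fun hcp => hp (Fin.ext hcp.symm)

lemma cons_lt (i0 : Fin 2) (J : Fin n → Fin 2) : (i0 : ℕ) + binExp n J < 2 ^ n + 1 := by
  have := binExp_lt n J; have := i0.isLt; omega

lemma sum_wvec_cons (g : Fin (2 ^ n + 1) → ℂ) (i0 : Fin 2) (m : Fin n → Fin 2) :
    ∑ p : Fin (2 ^ n + 1), g p * wvec A p (Fin.cons i0 m) =
      ∑ J : Fin n → Fin 2, g ⟨(i0 : ℕ) + binExp n J, cons_lt i0 J⟩ * A m J := by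
  simp only [wvec, PiLp.toLp_apply, Fin.cons_zero, Fin.cons_succ, Finset.mul_sum]
  rw [Finset.sum_comm]
  refine Finset.sum_congr rfl (fun J _ => ?_)
  rw [← sum_fin_ite ((i0 : ℕ) + binExp n J) (cons_lt i0 J)
    (fun p => g p * A m J)]
  exact Finset.sum_congr rfl (fun p _ => by rw [mul_ite, mul_zero])

lemma wvec_linearIndependent (hA : IsUnit A.det) : LinearIndependent ℂ (wvec A) := by
  rw [Fintype.linearIndependent_iff]
  intro g hg
  have hinj : Function.Injective A.mulVec :=
    Matrix.mulVec_injective_iff_isUnit.2 ((Matrix.isUnit_iff_isUnit_det A).2 hA)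
  have key : ∀ (i0 : Fin 2) (J : Fin n → Fin 2),
      g ⟨(i0 : ℕ) + binExp n J, cons_lt i0 J⟩ = 0 := by
    intro i0 J
    have hsum : ∀ m : Fin n → Fin 2,
        ∑ J' : Fin n → Fin 2, g ⟨(i0 : ℕ) + binExp n J', cons_lt i0 J'⟩ * A m J' = 0 := by
      intro m
      rw [← sum_wvec_cons]
      have h1 : (∑ p : Fin (2 ^ n + 1), g p • wvec A p) (Fin.cons i0 m) = 0 :=
        congrArg (fun v => v (Fin.cons i0 m)) hg
      rw [euc_sum_apply] at h1
      rw [Finset.sum_congr rfl (fun p _ => (euc_smul_apply (g p) (wvec A p) _).symm)]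
      exact h1
    have hmul : A.mulVec (fun J' => g ⟨(i0 : ℕ) + binExp n J', cons_lt i0 J'⟩) = 0 := by
      funext m
      simp only [Pi.zero_apply, Matrix.mulVec, dotProduct]
      rw [← hsum m]
      exact Finset.sum_congr rfl (fun J' _ => mul_comm _ _)
    have h0 : (fun J' => g ⟨(i0 : ℕ) + binExp n J', cons_lt i0 J'⟩) = 0 := by
      apply hinj
      rw [hmul, Matrix.mulVec_zero]
    exact congrFun h0 J
  intro p
  by_cases hp : (p : ℕ) < 2 ^ n
  · have := key 0 ((binEquiv n).symm ⟨(p : ℕ), hp⟩)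
    convert this using 2
    apply Fin.ext
    simp [binExp_symm]
  · have hp2 : (p : ℕ) = 2 ^ n := by have := p.isLt; omega
    have hlt : (p : ℕ) - 1 < 2 ^ n := by have := Nat.one_le_two_pow (n := n); omega
    have := key 1 ((binEquiv n).symm ⟨(p : ℕ) - 1, hlt⟩)
    convert this using 2
    apply Fin.ext
    simp only [binExp_symm]
    have := Nat.one_le_two_pow (n := n)
    omega

lemma orth_eq :
    (Submodule.span ℂ (Set.range (spanningVec n A)))ᗮ
      = (Submodule.span ℂ (Set.range (wvec A)))ᗮ := by
  ext ψ
  rw [mem_orth_iff, mem_orthogonal_span_range_iff]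

lemma finrank_orth (hA : IsUnit A.det) :
    Module.finrank ℂ
      ((Submodule.span ℂ (Set.range (spanningVec n A)))ᗮ :
        Submodule ℂ (EuclideanSpace ℂ (Fin (n + 1) → Fin 2))) = 2 ^ n - 1 := by
  rw [orth_eq]
  have h1 := Submodule.finrank_add_finrank_orthogonal
    (K := Submodule.span ℂ (Set.range (wvec A)))
  have h2 : Module.finrank ℂ (Submodule.span ℂ (Set.range (wvec A))) = 2 ^ n + 1 := by
    rw [finrank_span_eq_card (wvec_linearIndependent A hA)]
    simp
  have h3 : Module.finrank ℂ (EuclideanSpace ℂ (Fin (n + 1) → Fin 2)) = 2 ^ (n + 1) := by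
    rw [finrank_euclideanSpace]
    rw [Fintype.card_fun]
    simp
  have hpow : 2 ^ (n + 1) = 2 * 2 ^ n := by rw [pow_succ]; ring
  omega



lemma sum_Xmat (S : Finset (Fin (n + 1))) (β : ({i // i ∈ S} → Fin 2) → ℂ)
    (χ : ({i // i ∉ S} → Fin 2) → ℂ) (p : Fin (2 ^ n + 1)) :
    ∑ M : {i // i ∉ S} → Fin 2, χ M * Xmat n A S β M p
      = ∑ f : Fin (n + 1) → Fin 2,
          β (fun s : {i // i ∈ S} => f s.1) * χ (fun s : {i // i ∉ S} => f s.1)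
            * wvec A p f := by
  simp only [Xmat, wvec, PiLp.toLp_apply, Finset.mul_sum]
  rw [Finset.sum_comm]
  refine Finset.sum_congr rfl (fun i _ => ?_)
  rw [Finset.sum_comm]
  refine Finset.sum_congr rfl (fun J _ => ?_)
  by_cases hP : (i 0 : ℕ) + binExp n J = (p : ℕ)
  · simp only [hP, true_and, if_pos, mul_ite, mul_zero]
    rw [Finset.sum_ite_eq Finset.univ (fun s : {i // i ∉ S} => i s.1)
      (fun M => χ M * (β (fun s : {i // i ∈ S} => i s.1) * A (fun t => i t.succ) J)),
      if_pos (Finset.mem_univ _)]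
    ring
  · simp [hP]

def splitEquiv (S : Finset (Fin (n + 1))) :
    (Fin (n + 1) → Fin 2) ≃ ({i // i ∈ S} → Fin 2) × ({i // i ∉ S} → Fin 2) :=
  Equiv.piEquivPiSubtypeProd (fun i => i ∈ S) (fun _ => Fin 2)

lemma sum_Xmat_eq_conj_inner (S : Finset (Fin (n + 1)))
    (φ : ({i // i ∈ S} → Fin 2) → ℂ) (χ : ({i // i ∉ S} → Fin 2) → ℂ) (p : Fin (2 ^ n + 1)) :
    ∑ M : {i // i ∉ S} → Fin 2, conj (χ M) * Xmat n A S (fun g => conj (φ g)) M p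
      = conj ⟪wvec A p, (WithLp.toLp 2 (fun f => φ (fun s : {i // i ∈ S} => f s.1)
          * χ (fun s : {i // i ∉ S} => f s.1)) : EuclideanSpace ℂ (Fin (n + 1) → Fin 2))⟫ := by
  rw [sum_Xmat, inner_euc, map_sum]
  refine Finset.sum_congr rfl (fun f _ => ?_)
  rw [map_mul, map_mul, Complex.conj_conj]
  ring

lemma restrict_symm_fst (S : Finset (Fin (n + 1))) (g : {i // i ∈ S} → Fin 2)
    (h : {i // i ∉ S} → Fin 2) :
    (fun s : {i // i ∈ S} => (splitEquiv S).symm (g, h) s.1) = g :=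
  congrArg Prod.fst ((splitEquiv S).apply_symm_apply (g, h))

lemma restrict_symm_snd (S : Finset (Fin (n + 1))) (g : {i // i ∈ S} → Fin 2)
    (h : {i // i ∉ S} → Fin 2) :
    (fun s : {i // i ∉ S} => (splitEquiv S).symm (g, h) s.1) = h :=
  congrArg Prod.snd ((splitEquiv S).apply_symm_apply (g, h))

lemma inner_eq_conj_sum (S : Finset (Fin (n + 1))) (β : ({i // i ∈ S} → Fin 2) → ℂ)
    (χ : ({i // i ∉ S} → Fin 2) → ℂ) (p : Fin (2 ^ n + 1)) :
    ⟪wvec A p, (WithLp.toLp 2 (fun f => conj (β (fun s : {i // i ∈ S} => f s.1))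
        * conj (χ (fun s : {i // i ∉ S} => f s.1))) : EuclideanSpace ℂ (Fin (n + 1) → Fin 2))⟫
      = conj (∑ M : {i // i ∉ S} → Fin 2, χ M * Xmat n A S β M p) := by
  rw [inner_euc, sum_Xmat, map_sum]
  refine Finset.sum_congr rfl (fun f _ => ?_)
  rw [map_mul, map_mul]
  ring

lemma exists_biproduct_iff (S : Finset (Fin (n + 1))) :
    (∃ ψ : EuclideanSpace ℂ (Fin (n + 1) → Fin 2),
        ψ ∈ (Submodule.span ℂ (Set.range (spanningVec n A)))ᗮ ∧ ψ ≠ 0 ∧ IsBiproduct S ψ)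
      ↔ ∃ β : ({i // i ∈ S} → Fin 2) → ℂ, β ≠ 0 ∧
          ∃ χ : ({i // i ∉ S} → Fin 2) → ℂ, χ ≠ 0 ∧
            ∀ p : Fin (2 ^ n + 1), ∑ M : {i // i ∉ S} → Fin 2, χ M * Xmat n A S β M p = 0 := by
  constructor
  · rintro ⟨ψ, hmem, hne, φ, χ, hbi⟩
    have hψ : ∃ f : Fin (n + 1) → Fin 2, ψ f ≠ 0 := by
      by_contra hc
      push_neg at hc
      exact hne (PiLp.ext hc)
    obtain ⟨f0, hf0⟩ := hψ
    rw [hbi f0] at hf0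
    refine ⟨fun g => conj (φ g), ?_, fun M => conj (χ M), ?_, ?_⟩
    · intro hβ
      have := congrFun hβ (fun s : {i // i ∈ S} => f0 s.1)
      simp only [Pi.zero_apply, map_eq_zero] at this
      rw [this, zero_mul] at hf0
      exact hf0 rfl
    · intro hχ
      have := congrFun hχ (fun s : {i // i ∉ S} => f0 s.1)
      simp only [Pi.zero_apply, map_eq_zero] at this
      rw [this, mul_zero] at hf0
      exact hf0 rfl
    · intro p
      have hψeq : ψ = (WithLp.toLp 2 (fun f => φ (fun s : {i // i ∈ S} => f s.1)
          * χ (fun s : {i // i ∉ S} => f s.1)) : EuclideanSpace ℂ (Fin (n + 1) → Fin 2)) :=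
        PiLp.ext hbi
      rw [sum_Xmat_eq_conj_inner, ← hψeq, (mem_orth_iff A ψ).1 hmem p, map_zero]
  · rintro ⟨β, hβ, χ, hχ, hker⟩
    refine ⟨(WithLp.toLp 2 (fun f => conj (β (fun s : {i // i ∈ S} => f s.1))
        * conj (χ (fun s : {i // i ∉ S} => f s.1))) : EuclideanSpace ℂ (Fin (n + 1) → Fin 2)),
      ?_, ?_, fun g => conj (β g), fun M => conj (χ M), fun f => rfl⟩
    · rw [mem_orth_iff]
      intro p
      exact (inner_eq_conj_sum A S β χ p).trans (by rw [hker p, map_zero])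
    · obtain ⟨g, hg⟩ := Function.ne_iff.1 hβ
      obtain ⟨h, hh⟩ := Function.ne_iff.1 hχ
      intro h0
      have hval : conj (β g) * conj (χ h) = 0 := by
        have h2 := congrArg (fun v => v ((splitEquiv S).symm (g, h))) h0
        simp only [PiLp.toLp_apply, PiLp.zero_apply, restrict_symm_fst, restrict_symm_snd] at h2
        exact h2
      rcases mul_eq_zero.1 hval with h' | h'
      · exact hg (by simpa using h')
      · exact hh (by simpa using h')

lemma rank_eq_card_iff {m : Type*} [Fintype m] (M : Matrix m (Fin (2 ^ n + 1)) ℂ) :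
    M.rank = Fintype.card m ↔
      ∀ χ : m → ℂ, (∀ p, ∑ i, χ i * M i p = 0) → χ = 0 := by
  rw [Matrix.rank_eq_finrank_span_row, eq_comm, ← Set.finrank,
    ← linearIndependent_iff_card_eq_finrank_span, Fintype.linearIndependent_iff]
  constructor
  · intro h χ hχ
    funext i
    refine h χ ?_ i
    funext p
    rw [Finset.sum_apply]
    simpa [Pi.smul_apply, smul_eq_mul] using hχ p
  · intro h χ hχ i
    have hz : χ = 0 := by
      refine h χ (fun p => ?_)
      have h2 := congrFun hχ p
      rw [Finset.sum_apply] at h2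
      simpa using h2
    exact congrFun hz i

lemma isBiproduct_of_compl {S T : Finset (Fin (n + 1))} (hST : ∀ i, i ∈ T ↔ i ∉ S)
    {ψ : EuclideanSpace ℂ (Fin (n + 1) → Fin 2)}
    (h : IsBiproduct (d := fun _ => 2) S ψ) : IsBiproduct (d := fun _ => 2) T ψ := by
  obtain ⟨φ, χ, hbi⟩ := h
  refine ⟨fun g => χ (fun s => g ⟨s.1, (hST s.1).2 s.2⟩),
    fun g => φ (fun s => g ⟨s.1, fun hT => ((hST s.1).1 hT) s.2⟩), fun f => ?_⟩
  rw [hbi f]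
  exact mul_comm _ _

section Szero

def succEquiv : {i : Fin (n + 1) // i ∉ ({0} : Finset (Fin (n + 1)))} ≃ Fin n where
  toFun s := (s.1).pred (by simpa using s.2)
  invFun t := ⟨t.succ, by simp [Fin.succ_ne_zero]⟩
  left_inv s := Subtype.ext (Fin.succ_pred _ (by simpa using s.2))
  right_inv t := Fin.pred_succ _

lemma cons_restr_mem (i0 : Fin 2) (m : Fin n → Fin 2) :
    (fun s : {i // i ∈ ({0} : Finset (Fin (n + 1)))} =>
        Fin.cons (α := fun _ => Fin 2) i0 m s.1)
      = (fun _ : {i // i ∈ ({0} : Finset (Fin (n + 1)))} => i0) := by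
  funext s
  have hs : s.1 = 0 := Finset.mem_singleton.1 s.2
  rw [hs]
  exact Fin.cons_zero _ _

lemma cons_restr_not_mem (i0 : Fin 2) (m : Fin n → Fin 2) :
    (fun s : {i // i ∉ ({0} : Finset (Fin (n + 1)))} =>
        Fin.cons (α := fun _ => Fin 2) i0 m s.1)
      = (fun s => m (succEquiv s)) := by
  funext s
  have hne : s.1 ≠ 0 := by simpa using s.2
  conv_lhs => rw [← Fin.succ_pred s.1 hne]
  rw [Fin.cons_succ]
  rfl

lemma no_left_kernel_zero (hA : IsUnit A.det) :
    ¬ ∃ β : ({i // i ∈ ({0} : Finset (Fin (n + 1)))} → Fin 2) → ℂ, β ≠ 0 ∧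
        ∃ χ : ({i // i ∉ ({0} : Finset (Fin (n + 1)))} → Fin 2) → ℂ, χ ≠ 0 ∧
          ∀ p : Fin (2 ^ n + 1),
            ∑ M, χ M * Xmat n A ({0} : Finset (Fin (n + 1))) β M p = 0 := by
  rintro ⟨β, hβ, χ, hχ, hker⟩
  have hmem0 : (0 : Fin (n + 1)) ∈ ({0} : Finset (Fin (n + 1))) := Finset.mem_singleton_self 0
  let χt : (Fin n → Fin 2) → ℂ := fun m => χ (fun s => m (succEquiv s))
  let u : (Fin n → Fin 2) → ℂ := fun J => ∑ m, χt m * A m J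
  let b : ℕ → ℂ := fun k =>
    if h : k < 2 ^ n then u ((binEquiv n).symm ⟨k, h⟩) else 0
  have hinner : ∀ (i0 : Fin 2) (m : Fin n → Fin 2) (p : Fin (2 ^ n + 1)),
      χt m * wvec A p (Fin.cons i0 m)
        = ∑ J : Fin n → Fin 2,
            if (i0 : ℕ) + binExp n J = (p : ℕ) then χt m * A m J else 0 := by
    intro i0 m p
    simp only [wvec, PiLp.toLp_apply, Fin.cons_zero, Fin.cons_succ, Finset.mul_sum, mul_ite, mul_zero]
  have key : ∀ p : Fin (2 ^ n + 1),
      ∑ i0 : Fin 2, β (fun _ => i0) *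
        (∑ J : Fin n → Fin 2,
          if (i0 : ℕ) + binExp n J = (p : ℕ) then u J else 0) = 0 := by
    intro p
    have h0 := hker p
    rw [sum_Xmat] at h0
    rw [← Equiv.sum_comp (Fin.consEquiv (fun _ : Fin (n + 1) => Fin 2))
      (fun f => β (fun s : {i // i ∈ ({0} : Finset (Fin (n + 1)))} => f s.1)
        * χ (fun s : {i // i ∉ ({0} : Finset (Fin (n + 1)))} => f s.1) * wvec A p f),
      Fintype.sum_prod_type] at h0
    refine Eq.trans ?_ h0
    refine Finset.sum_congr rfl (fun i0 _ => ?_)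
    have hr : ∀ m : Fin n → Fin 2,
        β (fun s : {i // i ∈ ({0} : Finset (Fin (n + 1)))} =>
            (Fin.consEquiv (fun _ : Fin (n + 1) => Fin 2)) (i0, m) s.1)
          * χ (fun s : {i // i ∉ ({0} : Finset (Fin (n + 1)))} =>
            (Fin.consEquiv (fun _ : Fin (n + 1) => Fin 2)) (i0, m) s.1)
          * wvec A p ((Fin.consEquiv (fun _ : Fin (n + 1) => Fin 2)) (i0, m))
        = β (fun _ => i0) * (χt m * wvec A p (Fin.cons i0 m)) := by
      intro m
      have hc : (Fin.consEquiv (fun _ : Fin (n + 1) => Fin 2)) (i0, m) = Fin.cons i0 m := rfl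
      rw [hc, cons_restr_mem, cons_restr_not_mem, mul_assoc]
    rw [Finset.sum_congr rfl (fun m _ => hr m), ← Finset.mul_sum]
    congr 1
    rw [Finset.sum_congr rfl (fun m _ => hinner i0 m p)]
    conv_rhs => rw [Finset.sum_comm]
    refine Finset.sum_congr rfl (fun J _ => ?_)
    by_cases hcond : (i0 : ℕ) + binExp n J = (p : ℕ)
    · simp only [if_pos hcond]
      try rfl
    · simp only [if_neg hcond, Finset.sum_const_zero]
      try rfl
  have key2 : ∀ k : ℕ, ∀ hk : k < 2 ^ n + 1,
      ∑ i0 : Fin 2, β (fun _ => i0) *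
        (∑ J : Fin n → Fin 2,
          if (i0 : ℕ) + binExp n J = k then u J else 0) = 0 := fun k hk => key ⟨k, hk⟩
  -- the three-term recurrence
  have hsum0 : ∀ k, ∀ hk : k < 2 ^ n + 1,
      β (fun _ => (0 : Fin 2)) * b k
        + β (fun _ => (1 : Fin 2)) * (if k = 0 then 0 else b (k - 1)) = 0 := by
    intro k hk
    have h0 := key2 k hk
    rw [Fin.sum_univ_two] at h0
    have e0 : (∑ J : Fin n → Fin 2,
        if (((0 : Fin 2) : ℕ)) + binExp n J = k then u J else 0) = b k := by
      simp only [Fin.val_zero, zero_add]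
      rw [sum_binExp_ite]
    have e1 : (∑ J : Fin n → Fin 2,
        if (((1 : Fin 2) : ℕ)) + binExp n J = k then u J else 0)
          = (if k = 0 then 0 else b (k - 1)) := by
      by_cases hk0 : k = 0
      · subst hk0
        rw [if_pos rfl]
        refine Finset.sum_eq_zero (fun J _ => ?_)
        rw [if_neg]
        simp
      · rw [if_neg hk0]
        rw [Finset.sum_congr rfl (fun J _ =>
          if_congr (show (((1 : Fin 2) : ℕ)) + binExp n J = k
            ↔ binExp n J = k - 1 by simp only [Fin.val_one]; omega) rfl rfl), sum_binExp_ite]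
    rw [e0, e1] at h0
    exact h0
  -- nonvanishing of β at a constant string
  have hβcases : β (fun _ => (0 : Fin 2)) ≠ 0 ∨ β (fun _ => (1 : Fin 2)) ≠ 0 := by
    obtain ⟨g, hg⟩ := Function.ne_iff.1 hβ
    have hgconst : g = fun _ => g ⟨0, hmem0⟩ := by
      funext s
      exact congrArg g (Subtype.ext (Finset.mem_singleton.1 s.2))
    by_cases h : g ⟨0, hmem0⟩ = 0
    · left; rw [hgconst, h] at hg; exact hg
    · right
      have h1 : g ⟨0, hmem0⟩ = 1 := by omega
      rw [hgconst, h1] at hg; exact hg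
  have hbzero : ∀ k, k < 2 ^ n → b k = 0 := by
    by_cases h0 : β (fun _ => (0 : Fin 2)) = 0
    · have h1 : β (fun _ => (1 : Fin 2)) ≠ 0 := hβcases.resolve_left (by simpa using h0)
      intro k hk
      have hs := hsum0 (k + 1) (by omega)
      rw [if_neg (Nat.succ_ne_zero k), h0, zero_mul, zero_add, Nat.add_sub_cancel] at hs
      exact (mul_eq_zero.1 hs).resolve_left h1
    · intro k
      induction k using Nat.strong_induction_on with
      | _ k ih =>
        intro hk
        have hs := hsum0 k (by omega)
        by_cases hk0 : k = 0
        · subst hk0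
          rw [if_pos rfl, mul_zero, add_zero] at hs
          exact (mul_eq_zero.1 hs).resolve_left h0
        · rw [if_neg hk0] at hs
          rw [ih (k - 1) (by omega) (by omega), mul_zero, add_zero] at hs
          exact (mul_eq_zero.1 hs).resolve_left h0
  have hu0 : ∀ J, u J = 0 := by
    intro J
    have hlt := binExp_lt n J
    have hb1 : b (binExp n J) = 0 := hbzero _ hlt
    have hsymm : (binEquiv n).symm ⟨binExp n J, hlt⟩ = J := by
      rw [Equiv.symm_apply_eq]
      exact Fin.ext (binEquiv_val n J).symm
    have : b (binExp n J) = u J := by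
      show (if h : binExp n J < 2 ^ n then u ((binEquiv n).symm ⟨binExp n J, h⟩) else 0) = u J
      rw [dif_pos hlt, hsymm]
    rw [this] at hb1
    exact hb1
  have hχt0 : χt = 0 := by
    have hinj : Function.Injective (fun v => Matrix.vecMul v A) :=
      Matrix.vecMul_injective_iff_isUnit.2 ((Matrix.isUnit_iff_isUnit_det A).2 hA)
    apply hinj
    show Matrix.vecMul χt A = Matrix.vecMul 0 A
    rw [Matrix.zero_vecMul]
    funext J
    simp only [Matrix.vecMul, dotProduct, Pi.zero_apply]
    exact hu0 J
  obtain ⟨M, hM⟩ := Function.ne_iff.1 hχ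
  apply hM
  have : (fun s => (fun t => M (succEquiv.symm t)) (succEquiv s)) = M := by
    funext s
    show M (succEquiv.symm (succEquiv s)) = M s
    rw [Equiv.symm_apply_apply]
  calc χ M = χt (fun t => M (succEquiv.symm t)) := by rw [show χt (fun t => M (succEquiv.symm t))
        = χ (fun s => (fun t => M (succEquiv.symm t)) (succEquiv s)) from rfl, this]
    _ = 0 := by rw [hχt0]; rfl

end Szero

end GESAux

/-- STATEMENT 4 (Theorem 1 of the paper), for `n + 1 ≥ 3` qubits: the orthocomplement
`𝒱` of the span of the vectors `(1,α) ⊗ 𝒜(1,α,…,α^{2ⁿ−1})` is a GES of dimension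
`2ⁿ − 1` iff for every bipartition `S|S̄` other than `{A₁}|{A₂,…,A_{n+1}}` and every
nonzero `β`, the matrix `𝒳_σ(β)` has full rank `2^{|S̄|}`. -/

theorem GES_iff_Xmat_full_rank (n : ℕ) (hn : 2 ≤ n)
    (A : Matrix (Fin n → Fin 2) (Fin n → Fin 2) ℂ) (hA : IsUnit A.det) :
    (IsGES ((Submodule.span ℂ (Set.range (spanningVec n A)))ᗮ) ∧
      Module.finrank ℂ
        ((Submodule.span ℂ (Set.range (spanningVec n A)))ᗮ :
          Submodule ℂ (EuclideanSpace ℂ (Fin (n + 1) → Fin 2))) = 2 ^ n - 1) ↔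
    ∀ S : Finset (Fin (n + 1)), S.Nonempty → S ≠ Finset.univ →
      S ≠ {0} → S ≠ ({0} : Finset (Fin (n + 1)))ᶜ →
      ∀ β : ({i // i ∈ S} → Fin 2) → ℂ, β ≠ 0 →
        (Xmat n A S β).rank = Fintype.card ({i // i ∉ S} → Fin 2) := by
  constructor
  · rintro ⟨hges, _⟩ S hne huniv h0 h0c β hβ
    rw [GESAux.rank_eq_card_iff]
    intro χ hχker
    by_contra hχne
    obtain ⟨ψ, hmem, hne', hbi⟩ := (GESAux.exists_biproduct_iff A S).2 ⟨β, hβ, χ, hχne, hχker⟩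
    exact (hges ψ hmem hne').2 S hne huniv hbi
  · intro h
    refine ⟨?_, GESAux.finrank_orth A hA⟩
    intro ψ hmem hψ
    refine ⟨hψ, fun S hne huniv hbi => ?_⟩
    by_cases h0 : S = {0}
    · subst h0
      exact GESAux.no_left_kernel_zero A hA ((GESAux.exists_biproduct_iff A {0}).1 ⟨ψ, hmem, hψ, hbi⟩)
    by_cases h0c : S = ({0} : Finset (Fin (n + 1)))ᶜ
    · have hST : ∀ i : Fin (n + 1), i ∈ ({0} : Finset (Fin (n + 1))) ↔ i ∉ S := by
        intro i
        rw [h0c]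
        simp
      have hbi0 : IsBiproduct (d := fun _ => 2) ({0} : Finset (Fin (n + 1))) ψ :=
        GESAux.isBiproduct_of_compl hST hbi
      exact GESAux.no_left_kernel_zero A hA ((GESAux.exists_biproduct_iff A {0}).1 ⟨ψ, hmem, hψ, hbi0⟩)
    · obtain ⟨β, hβ, χ, hχ, hker⟩ := (GESAux.exists_biproduct_iff A S).1 ⟨ψ, hmem, hψ, hbi⟩
      exact hχ ((GESAux.rank_eq_card_iff (Xmat n A S β)).1 (h S hne huniv h0 h0c β hβ) χ hker)
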